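/- Assume μν < λ²m² and set r = √(m²/(μν) − 1/λ²) > 0. For every θ ∈ ℝ and t ∈ ℂ, the point z₁ = t, z₂ = −λtr e^{−iθ} + (2Ma²μ³/(b²ν³)) r e^{−7iθ}, z₃ = −λtr e^{iθ} − (4Ma²μ³/(b²ν³)) r e^{−5iθ}, z₄ = νr e^{iθ}, z₅ = μr e^{−iθ}, z₆ = (2Maμ²/(b²ν²)) e^{−4iθ}, z₇ = −(aμ²/(bν)) r e^{−3iθ} satisfies ∂W/∂z_i(z) = 0 for i = 4, 5, 6, 7 and V(z) = 2μνm² − μ²ν²/λ². Moreover V(w) ≥ 2μνm² − μ²ν²/λ² > 0 for every w ∈ ℂ⁷, so this 3-real-parameter family consists of global minima of V, and the strictly positive minimum value shows supersymmetry is broken with no runaway. -/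

import Mathlib

open Complex Filter Topology

lemma Mz2_aux_lb (lam mu nu m : ℝ) (hlam : 0 < lam) (hm : 0 < m) (u v : ℂ) :
    2*mu*nu*m^2 - mu^2*nu^2/lam^2 ≤
      lam^2*‖u*v - (m:ℂ)^2‖^2 + mu^2*‖u‖^2 + nu^2*‖v‖^2 := by
  set x := ‖u‖ with hxd
  set y := ‖v‖ with hyd
  set N := ‖u*v - (m:ℂ)^2‖ with hNd
  have hx : 0 ≤ x := norm_nonneg _
  have hy : 0 ≤ y := norm_nonneg _
  have hN : 0 ≤ N := norm_nonneg _
  have habs : |x*y - m^2| ≤ N := by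
    have h1 := abs_norm_sub_norm_le (u*v) ((m:ℂ)^2)
    have h2 : ‖u*v‖ = x*y := norm_mul u v
    have h3 : ‖((m:ℂ))^2‖ = m^2 := by
      rw [norm_pow]; simp [Complex.norm_real, abs_of_pos hm]
    rw [h2, h3] at h1
    exact h1
  have hsq : (x*y - m^2)^2 ≤ N^2 := by
    calc (x*y-m^2)^2 = |x*y-m^2|^2 := (_root_.sq_abs _).symm
    _ ≤ N^2 := pow_le_pow_left₀ (abs_nonneg _) habs 2
  have hxy : 2*(mu*nu)*(x*y) ≤ mu^2*x^2 + nu^2*y^2 := by nlinarith [sq_nonneg (mu*x - nu*y)]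
  have hL : (0:ℝ) < lam^2 := by positivity
  have key : 2*mu*nu*m^2*lam^2 - mu^2*nu^2 ≤ (lam^2*N^2 + mu^2*x^2 + nu^2*y^2)*lam^2 := by
    nlinarith [sq_nonneg (lam^2*(x*y - m^2) + mu*nu),
      mul_le_mul_of_nonneg_left hsq (le_of_lt (mul_pos hL hL)),
      mul_le_mul_of_nonneg_left hxy hL.le]
  calc 2*mu*nu*m^2 - mu^2*nu^2/lam^2 = (2*mu*nu*m^2*lam^2 - mu^2*nu^2)/lam^2 := by
        field_simp
  _ ≤ ((lam^2*N^2 + mu^2*x^2 + nu^2*y^2)*lam^2)/lam^2 := by gcongr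
  _ = lam^2*N^2 + mu^2*x^2 + nu^2*y^2 := by field_simp

set_option maxHeartbeats 2000000 in
/-- `Mz²` model with `μν < λ²m²` and `r = √(m²/(μν) − 1/λ²) > 0`.
For every `θ ∈ ℝ` and `t ∈ ℂ` the point
`z₁ = t`, `z₂ = −λtr e^{−iθ} + (2Ma²μ³/(b²ν³)) r e^{−7iθ}`,
`z₃ = −λtr e^{iθ} − (4Ma²μ³/(b²ν³)) r e^{−5iθ}`, `z₄ = νr e^{iθ}`, `z₅ = μr e^{−iθ}`,
`z₆ = (2Maμ²/(b²ν²)) e^{−4iθ}`, `z₇ = −(aμ²/(bν)) r e^{−3iθ}` satisfies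
`∂W/∂z_i = 0` for `i = 4,5,6,7` and `V(z) = 2μνm² − μ²ν²/λ²`. Moreover
`V(w) ≥ 2μνm² − μ²ν²/λ² > 0` for every `w ∈ ℂ⁷`, so this 3-real-parameter family consists
of global minima of `V`, and the strictly positive minimum shows SUSY breaking without
runaway. -/
theorem Mz2_vacuum_family
    (lam mu nu m a b M : ℝ)
    (hlam : 0 < lam) (hmu : 0 < mu) (hnu : 0 < nu) (hm : 0 < m)
    (ha : 0 < a) (hb : 0 < b) (hM : 0 < M)
    (hcond : mu * nu < lam ^ 2 * m ^ 2)
    (r : ℝ) (hr : r = Real.sqrt (m ^ 2 / (mu * nu) - 1 / lam ^ 2))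
    (W : (Fin 7 → ℂ) → ℂ)
    (hW : ∀ z, W z = (lam : ℂ) * z 0 * (z 3 * z 4 - (m : ℂ) ^ 2) +
      (mu : ℂ) * z 1 * z 3 + (nu : ℂ) * z 2 * z 4 + (a : ℂ) * (z 4) ^ 2 * z 5 +
      (b : ℂ) * z 3 * z 5 * z 6 + (M : ℂ) * (z 6) ^ 2)
    (V : (Fin 7 → ℂ) → ℝ)
    (hV : ∀ z, V z = ∑ i, ‖fderiv ℂ W z (Pi.single i 1)‖ ^ 2) :
    0 < r ∧
    0 < 2 * mu * nu * m ^ 2 - mu ^ 2 * nu ^ 2 / lam ^ 2 ∧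
    (∀ w : Fin 7 → ℂ, 2 * mu * nu * m ^ 2 - mu ^ 2 * nu ^ 2 / lam ^ 2 ≤ V w) ∧
    ∀ (θ : ℝ) (t : ℂ),
      let z : Fin 7 → ℂ :=
        ![t,
          -(lam : ℂ) * t * (r : ℂ) * Complex.exp (-(θ : ℂ) * Complex.I) +
            ((2 * M * a ^ 2 * mu ^ 3 / (b ^ 2 * nu ^ 3) : ℝ) : ℂ) * (r : ℂ) *
              Complex.exp (-7 * (θ : ℂ) * Complex.I),
          -(lam : ℂ) * t * (r : ℂ) * Complex.exp ((θ : ℂ) * Complex.I) -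
            ((4 * M * a ^ 2 * mu ^ 3 / (b ^ 2 * nu ^ 3) : ℝ) : ℂ) * (r : ℂ) *
              Complex.exp (-5 * (θ : ℂ) * Complex.I),
          (nu : ℂ) * (r : ℂ) * Complex.exp ((θ : ℂ) * Complex.I),
          (mu : ℂ) * (r : ℂ) * Complex.exp (-(θ : ℂ) * Complex.I),
          ((2 * M * a * mu ^ 2 / (b ^ 2 * nu ^ 2) : ℝ) : ℂ) *
            Complex.exp (-4 * (θ : ℂ) * Complex.I),
          -((a * mu ^ 2 / (b * nu) : ℝ) : ℂ) * (r : ℂ) *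
            Complex.exp (-3 * (θ : ℂ) * Complex.I)]
      fderiv ℂ W z (Pi.single 3 1) = 0 ∧
      fderiv ℂ W z (Pi.single 4 1) = 0 ∧
      fderiv ℂ W z (Pi.single 5 1) = 0 ∧
      fderiv ℂ W z (Pi.single 6 1) = 0 ∧
      V z = 2 * mu * nu * m ^ 2 - mu ^ 2 * nu ^ 2 / lam ^ 2 ∧
      (∀ w : Fin 7 → ℂ, V z ≤ V w) := by
  have hWfun : W = fun z : Fin 7 → ℂ => (lam : ℂ) * z 0 * (z 3 * z 4 - (m : ℂ) ^ 2) +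
      (mu : ℂ) * z 1 * z 3 + (nu : ℂ) * z 2 * z 4 + (a : ℂ) * (z 4) ^ 2 * z 5 +
      (b : ℂ) * z 3 * z 5 * z 6 + (M : ℂ) * (z 6) ^ 2 := funext hW
  subst hWfun
  -- the derivative formula
  have key : ∀ z v : Fin 7 → ℂ,
      fderiv ℂ (fun z : Fin 7 → ℂ => (lam : ℂ) * z 0 * (z 3 * z 4 - (m : ℂ) ^ 2) +
        (mu : ℂ) * z 1 * z 3 + (nu : ℂ) * z 2 * z 4 + (a : ℂ) * (z 4) ^ 2 * z 5 +
        (b : ℂ) * z 3 * z 5 * z 6 + (M : ℂ) * (z 6) ^ 2) z v =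
      ((lam:ℂ)*(z 3*z 4 - (m:ℂ)^2))*v 0 + ((mu:ℂ)*z 3)*v 1 + ((nu:ℂ)*z 4)*v 2
      + ((lam:ℂ)*z 0*z 4 + (mu:ℂ)*z 1 + (b:ℂ)*z 5*z 6)*v 3
      + ((lam:ℂ)*z 0*z 3 + (nu:ℂ)*z 2 + 2*(a:ℂ)*z 4*z 5)*v 4
      + ((a:ℂ)*z 4^2 + (b:ℂ)*z 3*z 6)*v 5
      + ((b:ℂ)*z 3*z 5 + 2*(M:ℂ)*z 6)*v 6 := by
    intro z v
    have h : ∀ i : Fin 7, HasFDerivAt (𝕜 := ℂ) (fun z : Fin 7 → ℂ => z i)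
        (ContinuousLinearMap.proj (R := ℂ) i) z := by
      intro i
      exact hasFDerivAt_apply (𝕜 := ℂ) i z
    rw [show (fun z : Fin 7 → ℂ => (lam : ℂ) * z 0 * (z 3 * z 4 - (m : ℂ) ^ 2) +
        (mu : ℂ) * z 1 * z 3 + (nu : ℂ) * z 2 * z 4 + (a : ℂ) * (z 4) ^ 2 * z 5 +
        (b : ℂ) * z 3 * z 5 * z 6 + (M : ℂ) * (z 6) ^ 2) =
      (fun z : Fin 7 → ℂ => (lam : ℂ) * z 0 * (z 3 * z 4 - (m : ℂ) ^ 2) +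
        (mu : ℂ) * z 1 * z 3 + (nu : ℂ) * z 2 * z 4 + (a : ℂ) * (z 4 * z 4) * z 5 +
        (b : ℂ) * z 3 * z 5 * z 6 + (M : ℂ) * (z 6 * z 6))
      from funext fun z => by ring]
    have hD := (((((((h 0).const_mul (lam:ℂ)).mul (((h 3).mul (h 4)).sub_const ((m:ℂ)^2))).add
        (((h 1).const_mul (mu:ℂ)).mul (h 3))).add
        (((h 2).const_mul (nu:ℂ)).mul (h 4))).add
        ((((h 4).mul (h 4)).const_mul (a:ℂ)).mul (h 5))).add
        ((((h 3).const_mul (b:ℂ)).mul (h 5)).mul (h 6))).add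
        (((h 6).mul (h 6)).const_mul (M:ℂ))
    rw [show fderiv ℂ (fun z : Fin 7 → ℂ => (lam : ℂ) * z 0 * (z 3 * z 4 - (m : ℂ) ^ 2) +
        (mu : ℂ) * z 1 * z 3 + (nu : ℂ) * z 2 * z 4 + (a : ℂ) * (z 4 * z 4) * z 5 +
        (b : ℂ) * z 3 * z 5 * z 6 + (M : ℂ) * (z 6 * z 6)) z = _ from hD.fderiv]
    simp only [ContinuousLinearMap.add_apply, ContinuousLinearMap.smul_apply,
      ContinuousLinearMap.coe_smul', ContinuousLinearMap.proj_apply, Pi.smul_apply,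
      smul_eq_mul, Pi.mul_apply]
    ring
  have hL2 : (0:ℝ) < lam^2 := by positivity
  have hmn : (0:ℝ) < mu*nu := mul_pos hmu hnu
  have hrr : 0 < m^2/(mu*nu) - 1/lam^2 := by
    rw [sub_pos, div_lt_div_iff₀ hL2 hmn]
    nlinarith
  have hrpos : 0 < r := hr ▸ Real.sqrt_pos.mpr hrr
  have hr2 : r^2 = m^2/(mu*nu) - 1/lam^2 := by rw [hr]; exact Real.sq_sqrt hrr.le
  have hposmin : 0 < 2*mu*nu*m^2 - mu^2*nu^2/lam^2 := by
    have h1 : mu^2*nu^2/lam^2 < mu*nu*m^2 := by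
      rw [div_lt_iff₀ hL2]; nlinarith
    nlinarith
  -- global lower bound
  have hlow : ∀ w : Fin 7 → ℂ,
      2*mu*nu*m^2 - mu^2*nu^2/lam^2 ≤ V w := by
    intro w
    rw [hV w, Fin.sum_univ_seven]
    have e0 : fderiv ℂ (fun z : Fin 7 → ℂ => (lam : ℂ) * z 0 * (z 3 * z 4 - (m : ℂ) ^ 2) +
        (mu : ℂ) * z 1 * z 3 + (nu : ℂ) * z 2 * z 4 + (a : ℂ) * (z 4) ^ 2 * z 5 +
        (b : ℂ) * z 3 * z 5 * z 6 + (M : ℂ) * (z 6) ^ 2) w (Pi.single 0 1)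
        = (lam:ℂ)*(w 3*w 4-(m:ℂ)^2) := by
      rw [key]; simp [Pi.single_apply]
    have e1 : fderiv ℂ (fun z : Fin 7 → ℂ => (lam : ℂ) * z 0 * (z 3 * z 4 - (m : ℂ) ^ 2) +
        (mu : ℂ) * z 1 * z 3 + (nu : ℂ) * z 2 * z 4 + (a : ℂ) * (z 4) ^ 2 * z 5 +
        (b : ℂ) * z 3 * z 5 * z 6 + (M : ℂ) * (z 6) ^ 2) w (Pi.single 1 1)
        = (mu:ℂ)*w 3 := by
      rw [key]; simp [Pi.single_apply]
    have e2 : fderiv ℂ (fun z : Fin 7 → ℂ => (lam : ℂ) * z 0 * (z 3 * z 4 - (m : ℂ) ^ 2) +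
        (mu : ℂ) * z 1 * z 3 + (nu : ℂ) * z 2 * z 4 + (a : ℂ) * (z 4) ^ 2 * z 5 +
        (b : ℂ) * z 3 * z 5 * z 6 + (M : ℂ) * (z 6) ^ 2) w (Pi.single 2 1)
        = (nu:ℂ)*w 4 := by
      rw [key]; simp [Pi.single_apply]
    rw [e0, e1, e2]
    have h0 : ‖(lam:ℂ)*(w 3*w 4-(m:ℂ)^2)‖^2 = lam^2*‖w 3*w 4-(m:ℂ)^2‖^2 := by
      rw [norm_mul, mul_pow, Complex.norm_real, Real.norm_eq_abs, abs_of_pos hlam]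
    have h1 : ‖(mu:ℂ)*w 3‖^2 = mu^2*‖w 3‖^2 := by
      rw [norm_mul, mul_pow, Complex.norm_real, Real.norm_eq_abs, abs_of_pos hmu]
    have h2 : ‖(nu:ℂ)*w 4‖^2 = nu^2*‖w 4‖^2 := by
      rw [norm_mul, mul_pow, Complex.norm_real, Real.norm_eq_abs, abs_of_pos hnu]
    rw [h0, h1, h2]
    have hlb := Mz2_aux_lb lam mu nu m hlam hm (w 3) (w 4)
    have n3 := pow_nonneg (norm_nonneg (fderiv ℂ (fun z : Fin 7 → ℂ =>
        (lam : ℂ) * z 0 * (z 3 * z 4 - (m : ℂ) ^ 2) +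
        (mu : ℂ) * z 1 * z 3 + (nu : ℂ) * z 2 * z 4 + (a : ℂ) * (z 4) ^ 2 * z 5 +
        (b : ℂ) * z 3 * z 5 * z 6 + (M : ℂ) * (z 6) ^ 2) w (Pi.single 3 1))) 2
    have n4 := pow_nonneg (norm_nonneg (fderiv ℂ (fun z : Fin 7 → ℂ =>
        (lam : ℂ) * z 0 * (z 3 * z 4 - (m : ℂ) ^ 2) +
        (mu : ℂ) * z 1 * z 3 + (nu : ℂ) * z 2 * z 4 + (a : ℂ) * (z 4) ^ 2 * z 5 +
        (b : ℂ) * z 3 * z 5 * z 6 + (M : ℂ) * (z 6) ^ 2) w (Pi.single 4 1))) 2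
    have n5 := pow_nonneg (norm_nonneg (fderiv ℂ (fun z : Fin 7 → ℂ =>
        (lam : ℂ) * z 0 * (z 3 * z 4 - (m : ℂ) ^ 2) +
        (mu : ℂ) * z 1 * z 3 + (nu : ℂ) * z 2 * z 4 + (a : ℂ) * (z 4) ^ 2 * z 5 +
        (b : ℂ) * z 3 * z 5 * z 6 + (M : ℂ) * (z 6) ^ 2) w (Pi.single 5 1))) 2
    have n6 := pow_nonneg (norm_nonneg (fderiv ℂ (fun z : Fin 7 → ℂ =>
        (lam : ℂ) * z 0 * (z 3 * z 4 - (m : ℂ) ^ 2) +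
        (mu : ℂ) * z 1 * z 3 + (nu : ℂ) * z 2 * z 4 + (a : ℂ) * (z 4) ^ 2 * z 5 +
        (b : ℂ) * z 3 * z 5 * z 6 + (M : ℂ) * (z 6) ^ 2) w (Pi.single 6 1))) 2
    linarith
  refine ⟨hrpos, by linarith [hposmin], by
    intro w; have := hlow w; linarith, ?_⟩
  intro θ t
  intro z
  have hz0 : z 0 = t := rfl
  have hz1 : z 1 = -(lam : ℂ) * t * (r : ℂ) * Complex.exp (-(θ : ℂ) * Complex.I) +
          ((2 * M * a ^ 2 * mu ^ 3 / (b ^ 2 * nu ^ 3) : ℝ) : ℂ) * (r : ℂ) *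
            Complex.exp (-7 * (θ : ℂ) * Complex.I) := rfl
  have hz2 : z 2 = -(lam : ℂ) * t * (r : ℂ) * Complex.exp ((θ : ℂ) * Complex.I) -
          ((4 * M * a ^ 2 * mu ^ 3 / (b ^ 2 * nu ^ 3) : ℝ) : ℂ) * (r : ℂ) *
            Complex.exp (-5 * (θ : ℂ) * Complex.I) := rfl
  have hz3 : z 3 = (nu : ℂ) * (r : ℂ) * Complex.exp ((θ : ℂ) * Complex.I) := rfl
  have hz4 : z 4 = (mu : ℂ) * (r : ℂ) * Complex.exp (-(θ : ℂ) * Complex.I) := rfl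
  have hz5 : z 5 = ((2 * M * a * mu ^ 2 / (b ^ 2 * nu ^ 2) : ℝ) : ℂ) *
          Complex.exp (-4 * (θ : ℂ) * Complex.I) := rfl
  have hz6 : z 6 = -((a * mu ^ 2 / (b * nu) : ℝ) : ℂ) * (r : ℂ) *
          Complex.exp (-3 * (θ : ℂ) * Complex.I) := rfl
  set E := Complex.exp (-(θ:ℂ)*Complex.I) with hE
  have hEne : E ≠ 0 := Complex.exp_ne_zero _
  have hk : ∀ k : ℕ, Complex.exp (-(k:ℂ)*(θ:ℂ)*Complex.I) = E^k := by
    intro k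
    rw [hE, ← Complex.exp_nat_mul]
    congr 1
    ring
  have hF : Complex.exp ((θ:ℂ)*Complex.I) = E⁻¹ := by
    rw [hE, show -(θ:ℂ)*Complex.I = -((θ:ℂ)*Complex.I) by ring, Complex.exp_neg, inv_inv]
  have h3 : Complex.exp (-3*(θ:ℂ)*Complex.I) = E^3 := by rw [← hk 3]; norm_num
  have h4 : Complex.exp (-4*(θ:ℂ)*Complex.I) = E^4 := by rw [← hk 4]; norm_num
  have h5 : Complex.exp (-5*(θ:ℂ)*Complex.I) = E^5 := by rw [← hk 5]; norm_num
  have h7 : Complex.exp (-7*(θ:ℂ)*Complex.I) = E^7 := by rw [← hk 7]; norm_num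
  have hbC : (b:ℂ) ≠ 0 := Complex.ofReal_ne_zero.mpr hb.ne'
  have hnuC : (nu:ℂ) ≠ 0 := Complex.ofReal_ne_zero.mpr hnu.ne'
  have hmuC : (mu:ℂ) ≠ 0 := Complex.ofReal_ne_zero.mpr hmu.ne'
  have w3 : (lam:ℂ)*z 0*z 4 + (mu:ℂ)*z 1 + (b:ℂ)*z 5*z 6 = 0 := by
    simp only [hz0, hz1, hz4, hz5, hz6, hF, h3, h4, h5, h7]
    push_cast
    field_simp [hbC, hnuC, hEne]
    ring
  have w4 : (lam:ℂ)*z 0*z 3 + (nu:ℂ)*z 2 + 2*(a:ℂ)*z 4*z 5 = 0 := by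
    simp only [hz0, hz2, hz3, hz4, hz5, hF, h3, h4, h5, h7]
    push_cast
    field_simp [hbC, hnuC, hEne]
    ring
  have w5 : (a:ℂ)*z 4^2 + (b:ℂ)*z 3*z 6 = 0 := by
    simp only [hz3, hz4, hz6, hF, h3, h4, h5, h7]
    push_cast
    field_simp [hbC, hnuC, hEne]
    ring
  have w6 : (b:ℂ)*z 3*z 5 + 2*(M:ℂ)*z 6 = 0 := by
    simp only [hz3, hz5, hz6, hF, h3, h4, h5, h7]
    push_cast
    field_simp [hbC, hnuC, hEne]
    ring
  have d3 : fderiv ℂ (fun z : Fin 7 → ℂ => (lam : ℂ) * z 0 * (z 3 * z 4 - (m : ℂ) ^ 2) +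
      (mu : ℂ) * z 1 * z 3 + (nu : ℂ) * z 2 * z 4 + (a : ℂ) * (z 4) ^ 2 * z 5 +
      (b : ℂ) * z 3 * z 5 * z 6 + (M : ℂ) * (z 6) ^ 2) z (Pi.single 3 1)
      = (lam:ℂ)*z 0*z 4 + (mu:ℂ)*z 1 + (b:ℂ)*z 5*z 6 := by
    rw [key]; simp [Pi.single_apply]
  have d4 : fderiv ℂ (fun z : Fin 7 → ℂ => (lam : ℂ) * z 0 * (z 3 * z 4 - (m : ℂ) ^ 2) +
      (mu : ℂ) * z 1 * z 3 + (nu : ℂ) * z 2 * z 4 + (a : ℂ) * (z 4) ^ 2 * z 5 +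
      (b : ℂ) * z 3 * z 5 * z 6 + (M : ℂ) * (z 6) ^ 2) z (Pi.single 4 1)
      = (lam:ℂ)*z 0*z 3 + (nu:ℂ)*z 2 + 2*(a:ℂ)*z 4*z 5 := by
    rw [key]; simp [Pi.single_apply]
  have d5 : fderiv ℂ (fun z : Fin 7 → ℂ => (lam : ℂ) * z 0 * (z 3 * z 4 - (m : ℂ) ^ 2) +
      (mu : ℂ) * z 1 * z 3 + (nu : ℂ) * z 2 * z 4 + (a : ℂ) * (z 4) ^ 2 * z 5 +
      (b : ℂ) * z 3 * z 5 * z 6 + (M : ℂ) * (z 6) ^ 2) z (Pi.single 5 1)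
      = (a:ℂ)*z 4^2 + (b:ℂ)*z 3*z 6 := by
    rw [key]; simp [Pi.single_apply]
  have d6 : fderiv ℂ (fun z : Fin 7 → ℂ => (lam : ℂ) * z 0 * (z 3 * z 4 - (m : ℂ) ^ 2) +
      (mu : ℂ) * z 1 * z 3 + (nu : ℂ) * z 2 * z 4 + (a : ℂ) * (z 4) ^ 2 * z 5 +
      (b : ℂ) * z 3 * z 5 * z 6 + (M : ℂ) * (z 6) ^ 2) z (Pi.single 6 1)
      = (b:ℂ)*z 3*z 5 + 2*(M:ℂ)*z 6 := by
    rw [key]; simp [Pi.single_apply]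
  have d0 : fderiv ℂ (fun z : Fin 7 → ℂ => (lam : ℂ) * z 0 * (z 3 * z 4 - (m : ℂ) ^ 2) +
      (mu : ℂ) * z 1 * z 3 + (nu : ℂ) * z 2 * z 4 + (a : ℂ) * (z 4) ^ 2 * z 5 +
      (b : ℂ) * z 3 * z 5 * z 6 + (M : ℂ) * (z 6) ^ 2) z (Pi.single 0 1)
      = (lam:ℂ)*(z 3*z 4-(m:ℂ)^2) := by
    rw [key]; simp [Pi.single_apply]
  have d1 : fderiv ℂ (fun z : Fin 7 → ℂ => (lam : ℂ) * z 0 * (z 3 * z 4 - (m : ℂ) ^ 2) +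
      (mu : ℂ) * z 1 * z 3 + (nu : ℂ) * z 2 * z 4 + (a : ℂ) * (z 4) ^ 2 * z 5 +
      (b : ℂ) * z 3 * z 5 * z 6 + (M : ℂ) * (z 6) ^ 2) z (Pi.single 1 1)
      = (mu:ℂ)*z 3 := by
    rw [key]; simp [Pi.single_apply]
  have d2 : fderiv ℂ (fun z : Fin 7 → ℂ => (lam : ℂ) * z 0 * (z 3 * z 4 - (m : ℂ) ^ 2) +
      (mu : ℂ) * z 1 * z 3 + (nu : ℂ) * z 2 * z 4 + (a : ℂ) * (z 4) ^ 2 * z 5 +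
      (b : ℂ) * z 3 * z 5 * z 6 + (M : ℂ) * (z 6) ^ 2) z (Pi.single 2 1)
      = (nu:ℂ)*z 4 := by
    rw [key]; simp [Pi.single_apply]
  have hnE : ‖E‖ = 1 := by
    rw [hE, Complex.norm_exp]
    simp
  have hnEi : ‖E⁻¹‖ = 1 := by rw [norm_inv, hnE]; norm_num
  have hVz : V z = 2 * mu * nu * m ^ 2 - mu ^ 2 * nu ^ 2 / lam ^ 2 := by
    rw [hV z, Fin.sum_univ_seven, d0, d1, d2, d3, d4, d5, d6, w3, w4, w5, w6]
    have hv0 : (lam:ℂ)*(z 3*z 4-(m:ℂ)^2) = ((lam*(mu*nu*r^2 - m^2) : ℝ) : ℂ) := by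
      simp only [hz3, hz4, hF]
      push_cast
      field_simp [hEne]
    have hv1 : (mu:ℂ)*z 3 = ((mu*nu*r : ℝ) : ℂ) * E⁻¹ := by
      simp only [hz3, hF]
      push_cast
      ring
    have hv2 : (nu:ℂ)*z 4 = ((mu*nu*r : ℝ) : ℂ) * E := by
      simp only [hz4]
      push_cast
      ring
    rw [hv0, hv1, hv2]
    rw [norm_mul, norm_mul, hnE, hnEi]
    simp only [Complex.norm_real, Real.norm_eq_abs, norm_zero, mul_one]
    rw [hr2]
    have hx : |lam*(mu*nu*(m^2/(mu*nu) - 1/lam^2) - m^2)| = mu*nu/lam := by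
      rw [show lam*(mu*nu*(m^2/(mu*nu) - 1/lam^2) - m^2) = -(mu*nu/lam) by
        field_simp; ring]
      rw [abs_neg, abs_of_pos (by positivity)]
    rw [hx]
    have hy : |mu*nu*r| = mu*nu*r := abs_of_pos (by positivity)
    rw [hy]
    have e : (mu*nu*r)^2 = mu^2*nu^2*(m^2/(mu*nu) - 1/lam^2) := by
      rw [← hr2]; ring
    rw [e]
    field_simp
    ring
  exact ⟨by rw [d3]; exact w3, by rw [d4]; exact w4, by rw [d5]; exact w5,
    by rw [d6]; exact w6, hVz, fun w => by rw [hVz]; exact hlow w⟩
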